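/- Let n ≥ 1 and let F : ℝ^n → ℝ^n be a continuously differentiable vector field such that F is integrable on ℝ^n and its divergence div F = Σ_{i=1}^n ∂F_i/∂x_i is integrable on ℝ^n. Then ∫_{ℝ^n} div F(x) dx = 0. -/

import Mathlib

open MeasureTheory Filter Set ENNReal Topology

theorem aux_main (m : ℕ) (G : (Fin (m+1) → ℝ) → (Fin (m+1) → ℝ))
    (hG : ContDiff ℝ 1 G) (hGint : Integrable G volume)
    (hdiv : Integrable (fun x => ∑ i : Fin (m+1), fderiv ℝ G x (Pi.single i 1) i) volume) :
    ∫ x, ∑ i : Fin (m+1), fderiv ℝ G x (Pi.single i 1) i = 0 := by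
  have hGc : Continuous G := hG.continuous
  set ψ : Fin (m+1) → ℝ → ℝ≥0∞ :=
    fun i t => ∫⁻ y : Fin m → ℝ, ‖G (i.insertNth t y)‖₊ with hψdef
  have hins : ∀ i : Fin (m+1), Measurable
      (fun p : ℝ × (Fin m → ℝ) => (‖G (i.insertNth p.1 p.2)‖₊ : ℝ≥0∞)) := by
    intro i
    have : (fun p : ℝ × (Fin m → ℝ) => i.insertNth p.1 p.2)
        = ⇑(MeasurableEquiv.piFinSuccAbove (fun _ : Fin (m+1) => ℝ) i).symm := by
      ext p : 1
      simp [MeasurableEquiv.piFinSuccAbove_symm_apply, Fin.insertNthEquiv]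
    exact ((hGc.measurable.comp (this ▸ (MeasurableEquiv.piFinSuccAbove
      (fun _ : Fin (m+1) => ℝ) i).symm.measurable)).nnnorm).coe_nnreal_ennreal
  have hψmeas : ∀ i, Measurable (ψ i) := fun i => Measurable.lintegral_prod_right (hins i)
  have key : ∀ i, ∫⁻ t, ψ i t = ∫⁻ x, ‖G x‖₊ := by
    intro i
    have mp := (MeasureTheory.volume_preserving_piFinSuccAbove (fun _ : Fin (m+1) => ℝ) i).symm
    have h2 := mp.lintegral_comp (f := fun x => (‖G x‖₊ : ℝ≥0∞))
      (hGc.measurable.nnnorm.coe_nnreal_ennreal)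
    rw [← h2, MeasureTheory.Measure.volume_eq_prod, lintegral_prod]
    · simp only [MeasurableEquiv.piFinSuccAbove_symm_apply, Fin.insertNthEquiv, Equiv.coe_fn_mk]
      rfl
    · refine AEMeasurable.mono_measure ?_ le_rfl
      rw [← MeasureTheory.Measure.volume_eq_prod]
      exact (hins i).aemeasurable
  -- total boundary mass function
  set Φ : ℝ → ℝ≥0∞ := fun t => ∑ i : Fin (m+1), (ψ i t + ψ i (-t)) with hΦdef
  have hΦmeas : Measurable Φ := by
    apply Finset.measurable_sum
    intro i _
    exact (hψmeas i).add ((hψmeas i).comp measurable_neg)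
  have hψnegint : ∀ i : Fin (m+1), ∫⁻ t, ψ i (-t) = ∫⁻ x, ‖G x‖₊ := by
    intro i
    rw [(Measure.measurePreserving_neg (volume : Measure ℝ)).lintegral_comp (hψmeas i)]
    exact key i
  have hGfin : ∫⁻ x, (‖G x‖₊ : ℝ≥0∞) < ∞ := hGint.2
  have hΦint : ∫⁻ t, Φ t < ∞ := by
    have : ∫⁻ t, Φ t = ∑ i : Fin (m+1), ((∫⁻ t, ψ i t) + ∫⁻ t, ψ i (-t)) := by
      simp only [hΦdef]
      rw [lintegral_finset_sum Finset.univ (f := fun i t => ψ i t + ψ i (-t))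
        (fun i _ => ((hψmeas i).add ((hψmeas i).comp measurable_neg) :
          Measurable fun t => ψ i t + ψ i (-t)))]
      exact Finset.sum_congr rfl fun i _ => lintegral_add_left (hψmeas i) _
    rw [this]
    refine ENNReal.sum_lt_top.mpr fun i _ => ?_
    rw [key i, hψnegint i]
    exact ENNReal.add_lt_top.mpr ⟨hGfin, hGfin⟩
  -- selection of good radii
  have hsel : ∀ k : ℕ, ∃ R : ℝ, (k : ℝ) < R ∧ Φ R < ((k : ℝ≥0∞) + 1)⁻¹ := by
    intro k
    by_contra h
    push_neg at h
    have hε : (0 : ℝ≥0∞) < ((k : ℝ≥0∞) + 1)⁻¹ :=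
      ENNReal.inv_pos.mpr (ENNReal.add_ne_top.mpr ⟨ENNReal.natCast_ne_top k, one_ne_top⟩)
    have h1 : ((k : ℝ≥0∞) + 1)⁻¹ * volume (Ioi (k : ℝ)) ≤ ∫⁻ t in Ioi (k : ℝ), Φ t := by
      rw [← setLIntegral_const]
      exact setLIntegral_mono hΦmeas fun x hx => h x hx
    rw [Real.volume_Ioi, ENNReal.mul_top hε.ne'] at h1
    exact absurd (h1.trans (setLIntegral_le_lintegral _ _)) (by simpa using hΦint.ne)
  choose R hRgt hRΦ using hsel
  -- the divergence theorem on boxes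
  have hbox : ∀ k : ℕ,
      ∫ x in Icc (fun _ : Fin (m+1) => -(R k)) (fun _ => R k),
        ∑ i : Fin (m+1), fderiv ℝ G x (Pi.single i 1) i =
      ∑ i : Fin (m+1),
        ((∫ y in Icc ((fun _ : Fin (m+1) => -(R k)) ∘ i.succAbove)
            ((fun _ : Fin (m+1) => R k) ∘ i.succAbove), G (i.insertNth (R k) y) i) -
          ∫ y in Icc ((fun _ : Fin (m+1) => -(R k)) ∘ i.succAbove)
            ((fun _ : Fin (m+1) => R k) ∘ i.succAbove), G (i.insertNth (-(R k)) y) i) := by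
    intro k
    have hRpos : (0 : ℝ) < R k := lt_of_le_of_lt (Nat.cast_nonneg k) (hRgt k)
    exact MeasureTheory.integral_divergence_of_hasFDerivAt_off_countable
      (fun _ => -(R k)) (fun _ => R k) (fun i => by simp; linarith)
      G (fderiv ℝ G) ∅ countable_empty hGc.continuousOn
      (fun x _ => (hG.differentiable one_ne_zero x).hasFDerivAt) hdiv.integrableOn
  -- bound on the boundary terms
  have hfacebound : ∀ k : ℕ, ∀ i : Fin (m+1), ∀ c : ℝ, ψ i c ≠ ∞ →
      ‖∫ y in Icc ((fun _ : Fin (m+1) => -(R k)) ∘ i.succAbove)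
          ((fun _ : Fin (m+1) => R k) ∘ i.succAbove), G (i.insertNth c y) i‖
        ≤ (ψ i c).toReal := by
    intro k i c hfin
    refine (norm_integral_le_lintegral_norm _).trans ?_
    refine ENNReal.toReal_mono hfin ?_
    simp only [ofReal_norm, enorm_eq_nnnorm]
    calc ∫⁻ y in Icc ((fun _ : Fin (m+1) => -(R k)) ∘ i.succAbove)
            ((fun _ : Fin (m+1) => R k) ∘ i.succAbove), (‖G (i.insertNth c y) i‖₊ : ℝ≥0∞)
        ≤ ∫⁻ y in Icc ((fun _ : Fin (m+1) => -(R k)) ∘ i.succAbove)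
            ((fun _ : Fin (m+1) => R k) ∘ i.succAbove), (‖G (i.insertNth c y)‖₊ : ℝ≥0∞) :=
          lintegral_mono fun y =>
            ENNReal.coe_le_coe.mpr (nnnorm_le_pi_nnnorm (G (i.insertNth c y)) i)
      _ ≤ ψ i c := setLIntegral_le_lintegral _ _
  -- finiteness of Φ at the chosen radii
  have hΦlt : ∀ k : ℕ, Φ (R k) < ⊤ := fun k =>
    (hRΦ k).trans (ENNReal.inv_lt_top.mpr (by simp))
  have hψleΦ : ∀ k : ℕ, ∀ i : Fin (m+1), ψ i (R k) ≤ Φ (R k) ∧ ψ i (-(R k)) ≤ Φ (R k) := by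
    intro k i
    constructor
    · exact le_self_add.trans (Finset.single_le_sum (f := fun i => ψ i (R k) + ψ i (-(R k)))
        (fun i _ => zero_le) (Finset.mem_univ i))
    · exact le_add_self.trans (Finset.single_le_sum (f := fun i => ψ i (R k) + ψ i (-(R k)))
        (fun i _ => zero_le) (Finset.mem_univ i))
  -- bound on each box integral
  have hbound : ∀ k : ℕ,
      ‖∫ x in Icc (fun _ : Fin (m+1) => -(R k)) (fun _ => R k),
        ∑ i : Fin (m+1), fderiv ℝ G x (Pi.single i 1) i‖ ≤ (((k : ℝ) + 1))⁻¹ := by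
    intro k
    rw [hbox k]
    have h1 : ∀ i : Fin (m+1),
        ‖(∫ y in Icc ((fun _ : Fin (m+1) => -(R k)) ∘ i.succAbove)
            ((fun _ : Fin (m+1) => R k) ∘ i.succAbove), G (i.insertNth (R k) y) i) -
          ∫ y in Icc ((fun _ : Fin (m+1) => -(R k)) ∘ i.succAbove)
            ((fun _ : Fin (m+1) => R k) ∘ i.succAbove), G (i.insertNth (-(R k)) y) i‖
          ≤ (ψ i (R k)).toReal + (ψ i (-(R k))).toReal := by
      intro i
      refine (norm_sub_le _ _).trans (add_le_add ?_ ?_)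
      · exact hfacebound k i (R k) (((hψleΦ k i).1.trans_lt (hΦlt k)).ne)
      · exact hfacebound k i (-(R k)) (((hψleΦ k i).2.trans_lt (hΦlt k)).ne)
    calc ‖∑ i : Fin (m+1), _‖ ≤ ∑ i : Fin (m+1),
          ((ψ i (R k)).toReal + (ψ i (-(R k))).toReal) :=
        (norm_sum_le _ _).trans (Finset.sum_le_sum fun i _ => h1 i)
      _ = (Φ (R k)).toReal := by
        rw [ENNReal.toReal_sum (fun i _ => (ENNReal.add_lt_top.mpr
          ⟨(hψleΦ k i).1.trans_lt (hΦlt k), (hψleΦ k i).2.trans_lt (hΦlt k)⟩).ne)]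
        exact Finset.sum_congr rfl fun i _ => (ENNReal.toReal_add
          (((hψleΦ k i).1.trans_lt (hΦlt k)).ne) (((hψleΦ k i).2.trans_lt (hΦlt k)).ne)).symm
      _ ≤ (((k : ℝ≥0∞) + 1)⁻¹).toReal :=
        ENNReal.toReal_mono (ENNReal.inv_ne_top.mpr (by simp)) (hRΦ k).le
      _ = ((k : ℝ) + 1)⁻¹ := by
        rw [ENNReal.toReal_inv, ENNReal.toReal_add (ENNReal.natCast_ne_top k) ENNReal.one_ne_top]
        simp
  -- the box integrals tend to zero
  have hzero : Tendsto (fun k : ℕ =>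
      ∫ x in Icc (fun _ : Fin (m+1) => -(R k)) (fun _ => R k),
        ∑ i : Fin (m+1), fderiv ℝ G x (Pi.single i 1) i) atTop (𝓝 0) := by
    refine squeeze_zero_norm hbound ?_
    have := tendsto_one_div_add_atTop_nhds_zero_nat (𝕜 := ℝ)
    simpa [one_div] using this
  -- the box integrals tend to the full integral
  have hlim : Tendsto (fun k : ℕ =>
      ∫ x in Icc (fun _ : Fin (m+1) => -(R k)) (fun _ => R k),
        ∑ i : Fin (m+1), fderiv ℝ G x (Pi.single i 1) i) atTop
      (𝓝 (∫ x, ∑ i : Fin (m+1), fderiv ℝ G x (Pi.single i 1) i)) := by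
    have heq : ∀ k : ℕ,
        ∫ x in Icc (fun _ : Fin (m+1) => -(R k)) (fun _ => R k),
          ∑ i : Fin (m+1), fderiv ℝ G x (Pi.single i 1) i
        = ∫ x, (Icc (fun _ : Fin (m+1) => -(R k)) (fun _ => R k)).indicator
            (fun x => ∑ i : Fin (m+1), fderiv ℝ G x (Pi.single i 1) i) x :=
      fun k => (integral_indicator measurableSet_Icc).symm
    simp_rw [heq]
    refine tendsto_integral_of_dominated_convergence
      (fun x => ‖∑ i : Fin (m+1), fderiv ℝ G x (Pi.single i 1) i‖)
      (fun k => hdiv.aestronglyMeasurable.indicator measurableSet_Icc)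
      hdiv.norm
      (fun k => ae_of_all _ fun x => norm_indicator_le_norm_self _ _)
      (ae_of_all _ fun x => ?_)
    have hev : ∀ᶠ k : ℕ in atTop,
        (Icc (fun _ : Fin (m+1) => -(R k)) (fun _ => R k)).indicator
          (fun x => ∑ i : Fin (m+1), fderiv ℝ G x (Pi.single i 1) i) x
        = ∑ i : Fin (m+1), fderiv ℝ G x (Pi.single i 1) i := by
      filter_upwards [eventually_ge_atTop ⌈‖x‖⌉₊] with k hk
      apply Set.indicator_of_mem
      have hxk : ‖x‖ ≤ (k : ℝ) :=
        (Nat.le_ceil _).trans (by exact_mod_cast hk)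
      have hxR : ∀ i, |x i| ≤ R k := fun i =>
        ((Real.norm_eq_abs (x i) ▸ norm_le_pi_norm x i).trans hxk).trans (hRgt k).le
      constructor
      · intro i
        simpa using (abs_le.mp (hxR i)).1
      · intro i
        exact (abs_le.mp (hxR i)).2
    exact tendsto_const_nhds.congr' (hev.mono fun k h => h.symm)
  exact tendsto_nhds_unique hlim hzero

/-- If `F : ℝⁿ → ℝⁿ` is a continuously differentiable vector field which is
integrable and whose divergence is integrable, then `∫ div F = 0`. -/
theorem integral_div_eq_zero_of_integrable
    (n : ℕ) (hn : 1 ≤ n)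
    (F : EuclideanSpace ℝ (Fin n) → EuclideanSpace ℝ (Fin n))
    (hF : ContDiff ℝ 1 F)
    (hFint : Integrable F volume)
    (hdivint : Integrable
      (fun x => ∑ i : Fin n, fderiv ℝ F x (EuclideanSpace.single i 1) i) volume) :
    ∫ x : EuclideanSpace ℝ (Fin n),
      ∑ i : Fin n, fderiv ℝ F x (EuclideanSpace.single i 1) i = 0 := by
  obtain ⟨m, rfl⟩ : ∃ m, n = m + 1 := ⟨n - 1, (Nat.succ_pred_eq_of_pos hn).symm⟩
  set e : EuclideanSpace ℝ (Fin (m+1)) ≃L[ℝ] (Fin (m+1) → ℝ) :=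
    EuclideanSpace.equiv (Fin (m+1)) ℝ with he
  set G : (Fin (m+1) → ℝ) → (Fin (m+1) → ℝ) := fun x => e (F (e.symm x)) with hGdef
  have hmp : MeasurePreserving (fun x : Fin (m+1) → ℝ =>
      (e.symm x : EuclideanSpace ℝ (Fin (m+1)))) volume volume :=
    PiLp.volume_preserving_toLp (Fin (m+1))
  have hemb : MeasurableEmbedding (fun x : Fin (m+1) → ℝ =>
      (e.symm x : EuclideanSpace ℝ (Fin (m+1)))) :=
    (MeasurableEquiv.toLp 2 (Fin (m+1) → ℝ)).measurableEmbedding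
  have hG : ContDiff ℝ 1 G :=
    (e : EuclideanSpace ℝ (Fin (m+1)) →L[ℝ] (Fin (m+1) → ℝ)).contDiff.comp
      (hF.comp (e.symm : (Fin (m+1) → ℝ) →L[ℝ] EuclideanSpace ℝ (Fin (m+1))).contDiff)
  have hGint : Integrable G volume := by
    have h1 : Integrable (fun x : Fin (m+1) → ℝ => F (e.symm x)) volume :=
      (hmp.integrable_comp_emb hemb).mpr hFint
    exact (e : EuclideanSpace ℝ (Fin (m+1)) →L[ℝ] (Fin (m+1) → ℝ)).integrable_comp h1
  have hfd : ∀ (x : Fin (m+1) → ℝ) (i : Fin (m+1)),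
      fderiv ℝ G x (Pi.single i 1) i = fderiv ℝ F (e.symm x) (EuclideanSpace.single i 1) i := by
    intro x i
    have hF' := (hF.differentiable one_ne_zero (e.symm x)).hasFDerivAt
    have hcomp : HasFDerivAt G
        (((e : EuclideanSpace ℝ (Fin (m+1)) →L[ℝ] (Fin (m+1) → ℝ))).comp
          ((fderiv ℝ F (e.symm x)).comp
            (e.symm : (Fin (m+1) → ℝ) →L[ℝ] EuclideanSpace ℝ (Fin (m+1))))) x :=
      (e.toContinuousLinearMap.hasFDerivAt).comp x
        (hF'.comp x (e.symm.toContinuousLinearMap.hasFDerivAt))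
    rw [hcomp.fderiv]
    rfl
  have hdivG : Integrable (fun x => ∑ i : Fin (m+1), fderiv ℝ G x (Pi.single i 1) i) volume := by
    simp_rw [hfd]
    exact (hmp.integrable_comp_emb hemb).mpr hdivint
  have h0 := aux_main m G hG hGint hdivG
  rw [← hmp.integral_comp hemb
    (fun x => ∑ i : Fin (m+1), fderiv ℝ F x (EuclideanSpace.single i 1) i)]
  rw [← h0]
  refine integral_congr_ae (Eventually.of_forall fun x => ?_)
  exact (Finset.sum_congr rfl fun i _ => (hfd x i)).symm
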